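/- Energy conservation of the semi-discrete scheme: if dv_i/dt = -(1/ρ_i)⟨∇p⟩_i, the constraint Σ_i |ω_i| v_i · ⟨∇φ⟩_i = 0 holds for all φ, and the volumes |ω_i| and densities ρ_i are constant in time, then E = (1/2) Σ_i |ω_i| ρ_i |v_i|² satisfies dE/dt = 0. -/

import Mathlib

/-- Energy conservation of the semi-discrete scheme: if `dvᵢ/dt = -(1/ρᵢ) ⟨∇p⟩ᵢ`, the
discrete divergence constraint `Σᵢ |ωᵢ| vᵢ · ⟨∇φ⟩ᵢ = 0` holds for all test values `φ`, and
the volumes `|ωᵢ|` and densities `ρᵢ` are constant in time, then the total energy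
`E = (1/2) Σᵢ |ωᵢ| ρᵢ |vᵢ|²` is conserved: `dE/dt = 0`. Here `sg t φ` denotes the discrete
strong gradient operator on the (moving) Voronoi mesh at time `t`. -/
theorem semidiscrete_energy_conservation {d N : ℕ}
    (vol ρ : Fin N → ℝ) (hvol : ∀ i, 0 < vol i) (hρ : ∀ i, 0 < ρ i)
    (sg : ℝ → (Fin N → ℝ) → Fin N → EuclideanSpace ℝ (Fin d))
    (v : ℝ → Fin N → EuclideanSpace ℝ (Fin d))
    (p : ℝ → Fin N → ℝ)
    (hmom : ∀ t i, HasDerivAt (fun s => v s i) (-((ρ i)⁻¹ • sg t (p t) i)) t)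
    (hconstraint : ∀ t, ∀ φ : Fin N → ℝ,
      ∑ i, vol i * (inner ℝ (v t i) (sg t φ i) : ℝ) = 0) :
    ∀ t, HasDerivAt (fun s => (1 / 2) * ∑ i, vol i * ρ i * ‖v s i‖ ^ 2) 0 t := by
  intro t
  have key : ∀ i : Fin N, HasDerivAt (fun s => vol i * ρ i * ‖v s i‖ ^ 2)
      (-(2 * (vol i * (inner ℝ (v t i) (sg t (p t) i) : ℝ)))) t := by
    intro i
    have h1 : HasDerivAt (fun s => (inner ℝ (v s i) (v s i) : ℝ))
        ((inner ℝ (v t i) (-((ρ i)⁻¹ • sg t (p t) i)) : ℝ) +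
          (inner ℝ (-((ρ i)⁻¹ • sg t (p t) i)) (v t i) : ℝ)) t :=
      (hmom t i).inner ℝ (hmom t i)
    have h2 : HasDerivAt (fun s => ‖v s i‖ ^ 2)
        (-(2 * ((ρ i)⁻¹ * (inner ℝ (v t i) (sg t (p t) i) : ℝ)))) t := by
      have := h1
      simp only [real_inner_self_eq_norm_sq] at this ⊢
      convert this using 1
      rw [inner_neg_right, inner_neg_left, real_inner_smul_right, real_inner_smul_left,
        real_inner_comm (sg t (p t) i) (v t i)]
      ring
    have h3 := h2.const_mul (vol i * ρ i)
    convert h3 using 1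
    · rfl
    · rfl
    have hinv : ρ i * (ρ i)⁻¹ = 1 := mul_inv_cancel₀ (hρ i).ne'
    linear_combination (2 * vol i * inner ℝ (v t i) (sg t (p t) i)) * hinv
  have hsum : HasDerivAt (fun s => ∑ i, vol i * ρ i * ‖v s i‖ ^ 2)
      (∑ i, -(2 * (vol i * (inner ℝ (v t i) (sg t (p t) i) : ℝ)))) t :=
    HasDerivAt.fun_sum (fun i _ => key i)
  have h0 : (∑ i, -(2 * (vol i * (inner ℝ (v t i) (sg t (p t) i) : ℝ)))) = 0 := by
    have hc := hconstraint t (p t)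
    calc (∑ i, -(2 * (vol i * (inner ℝ (v t i) (sg t (p t) i) : ℝ))))
        = (-2) * ∑ i, vol i * (inner ℝ (v t i) (sg t (p t) i) : ℝ) := by
          rw [Finset.mul_sum]; exact Finset.sum_congr rfl (fun i _ => by ring)
      _ = 0 := by rw [hc, mul_zero]
  have := hsum.const_mul ((1:ℝ)/2)
  rw [h0, mul_zero] at this
  exact this
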